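/- Let G be a locally compact Hausdorff topological group acting continuously on a locally compact Hausdorff topological space Σ. A point σ ∈ Σ is almost periodic if and only if the orbit closure closure(O(σ)) is compact and minimal. -/

import Mathlib

open Set MulAction Pointwise

/-- The recurrence set `Rec(M,N) = {g ∈ G ∣ (g•M) ∩ N ≠ ∅}`. -/
def RecSet (G : Type*) {A : Type*} [SMul G A] (M N : Set A) : Set G :=
  {g : G | ((g • M) ∩ N).Nonempty}

/-- A subset `S` of a topological group is syndetic if `K·S = G` for some compact `K`. -/
def Syndetic {G : Type*} [Mul G] [TopologicalSpace G] (S : Set G) : Prop :=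
  ∃ K : Set G, IsCompact K ∧ K * S = Set.univ

/-- The limit set `L(σ) = ⋂_{K ⊆ G compact} closure {g•σ ∣ g ∈ G \ K}`. -/
def LimitSet (G : Type*) {A : Type*} [TopologicalSpace G] [TopologicalSpace A] [SMul G A]
    (σ : A) : Set A :=
  ⋂ (K : Set G) (_ : IsCompact K), closure ((fun g : G => g • σ) '' Kᶜ)

/-- The set of fixed points of the action. -/
def FixPts (G A : Type*) [SMul G A] : Set A := {σ | ∀ g : G, g • σ = σ}

/-- The set of periodic points: those whose stabilizer is syndetic. -/
def PerPts (G A : Type*) [Mul G] [TopologicalSpace G] [SMul G A] : Set A :=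
  {σ | Syndetic {g : G | g • σ = σ}}

/-- The set of weakly periodic points: those whose stabilizer is not compact. -/
def WPerPts (G A : Type*) [TopologicalSpace G] [SMul G A] : Set A :=
  {σ | ¬ IsCompact {g : G | g • σ = σ}}

/-- The set of almost periodic points: `Rec({σ},U)` is syndetic for every neighborhood
`U` of `σ`. -/
def APerPts (G A : Type*) [Mul G] [TopologicalSpace G] [TopologicalSpace A] [SMul G A] :
    Set A :=
  {σ | ∀ U ∈ nhds σ, Syndetic {g : G | g • σ ∈ U}}

/-- The set of recurrent points: `σ ∈ L(σ)`. -/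
def RecPts (G A : Type*) [TopologicalSpace G] [TopologicalSpace A] [SMul G A] : Set A :=
  {σ | σ ∈ LimitSet G σ}

/-- The set of non-wandering points: `Rec(W,W)` is not relatively compact for any
neighborhood `W` of `σ`. -/
def NWPts (G A : Type*) [TopologicalSpace G] [TopologicalSpace A] [SMul G A] : Set A :=
  {σ | ∀ W ∈ nhds σ, ¬ IsCompact (closure (RecSet G W W))}

open Filter

/-- Key lemma: if `σ` is almost periodic and `τ` is in the orbit closure of `σ`,
then `σ` is in the orbit closure of `τ`. -/
lemma aper_key {G A : Type*} [Group G] [TopologicalSpace G] [IsTopologicalGroup G]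
    [TopologicalSpace A] [T2Space A] [LocallyCompactSpace A]
    [MulAction G A] [ContinuousSMul G A] {σ : A} (h : σ ∈ APerPts G A)
    {τ : A} (hτ : τ ∈ closure (orbit G σ)) : σ ∈ closure (orbit G τ) := by
  rw [mem_closure_iff_nhds]
  intro U hU
  obtain ⟨U', hU'n, hU'U, hU'c⟩ := local_compact_nhds hU
  obtain ⟨K, hK, hKS⟩ := h U' hU'n
  -- choice of k g ∈ K with (k g)⁻¹ * g • σ ∈ U'
  have hsel : ∀ g : G, ∃ k : G, k ∈ K ∧ ((k⁻¹ * g) • σ) ∈ U' := by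
    intro g
    have : g ∈ K * {g : G | g • σ ∈ U'} := by rw [hKS]; trivial
    obtain ⟨k, hk, s, hs, rfl⟩ := this
    exact ⟨k, hk, by simpa using hs⟩
  choose k hkK hkU using hsel
  -- ultrafilter on G mapping to τ
  have hτ' := hτ
  rw [mem_closure_iff_ultrafilter] at hτ'
  obtain ⟨F, hFo, hFτ⟩ := hτ'
  have hrange : Set.range (fun g : G => g • σ) ∈ F := hFo
  haveI : (Filter.comap (fun g : G => g • σ) ↑F).NeBot :=
    Filter.NeBot.comap_of_range_mem F.neBot hrange
  set 𝒰 : Ultrafilter G := Ultrafilter.of (Filter.comap (fun g : G => g • σ) ↑F) with h𝒰def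
  have h𝒰le : ↑𝒰 ≤ Filter.comap (fun g : G => g • σ) ↑F := Ultrafilter.of_le _
  have htendφ : Tendsto (fun g : G => g • σ) ↑𝒰 (nhds τ) := by
    calc Filter.map (fun g : G => g • σ) ↑𝒰
        ≤ Filter.map (fun g : G => g • σ) (Filter.comap (fun g : G => g • σ) ↑F) :=
          Filter.map_mono h𝒰le
      _ = ↑F := Filter.map_comap_of_mem hrange
      _ ≤ nhds τ := hFτ
  -- limit of k along 𝒰
  have hKmem : ↑(𝒰.map k) ≤ 𝓟 K := by
    rw [Filter.le_principal_iff]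
    exact Filter.mem_map.mpr (Filter.univ_mem' fun g => hkK g)
  obtain ⟨k₀, hk₀K, hk₀⟩ := hK.ultrafilter_le_nhds (𝒰.map k) hKmem
  have htendk : Tendsto k ↑𝒰 (nhds k₀) := hk₀
  have htend : Tendsto (fun g : G => (k g)⁻¹ • (g • σ)) ↑𝒰 (nhds (k₀⁻¹ • τ)) :=
    (htendk.inv).smul htendφ
  have hmem : k₀⁻¹ • τ ∈ U' := by
    refine hU'c.isClosed.mem_of_tendsto htend (Filter.Eventually.of_forall fun g => ?_)
    simpa [mul_smul] using hkU g
  exact ⟨k₀⁻¹ • τ, hU'U hmem, k₀⁻¹, rfl⟩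

/-- For a continuous action of a locally compact Hausdorff topological group on a
locally compact Hausdorff space: `σ` is almost periodic iff `closure(O(σ))` is compact
and minimal. -/
theorem stmt17 {G A : Type*} [Group G] [TopologicalSpace G] [IsTopologicalGroup G] [T2Space G]
    [LocallyCompactSpace G]
    [TopologicalSpace A] [T2Space A] [LocallyCompactSpace A]
    [MulAction G A] [ContinuousSMul G A] (σ : A) :
    σ ∈ APerPts G A ↔
      (IsCompact (closure (MulAction.orbit G σ)) ∧
        ∀ N : Set A, N ⊆ closure (MulAction.orbit G σ) → IsClosed N →
          (∀ g : G, g • N ⊆ N) → N.Nonempty → N = closure (MulAction.orbit G σ)) := by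
  constructor
  · intro hap
    constructor
    · -- compactness
      obtain ⟨U, hUn, -, hUc⟩ := local_compact_nhds (Filter.univ_mem : (univ : Set A) ∈ nhds σ)
      obtain ⟨K, hK, hKS⟩ := hap U hUn
      have hKU : IsCompact ((fun p : G × A => p.1 • p.2) '' (K ×ˢ U)) :=
        (hK.prod hUc).image continuous_smul
      have horb : orbit G σ ⊆ (fun p : G × A => p.1 • p.2) '' (K ×ˢ U) := by
        rintro _ ⟨g, rfl⟩
        have : g ∈ K * {g : G | g • σ ∈ U} := by rw [hKS]; trivial
        obtain ⟨k, hk, s, hs, rfl⟩ := this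
        exact ⟨(k, s • σ), ⟨hk, hs⟩, (mul_smul k s σ).symm⟩
      exact hKU.of_isClosed_subset isClosed_closure
        (closure_minimal horb hKU.isClosed)
    · -- minimality
      intro N hNsub hNcl hNinv ⟨τ, hτN⟩
      have hστ : σ ∈ closure (orbit G τ) := aper_key hap (hNsub hτN)
      have horbτ : orbit G τ ⊆ N := by
        rintro _ ⟨g, rfl⟩
        exact hNinv g (smul_mem_smul_set hτN)
      have hσN : σ ∈ N := (closure_minimal horbτ hNcl) hστ
      have horbσ : orbit G σ ⊆ N := by
        rintro _ ⟨g, rfl⟩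
        exact hNinv g (smul_mem_smul_set hσN)
      exact le_antisymm hNsub (closure_minimal horbσ hNcl)
  · rintro ⟨hcomp, hmin⟩ U hU
    set V := interior U with hVdef
    have hVσ : σ ∈ V := mem_interior_iff_mem_nhds.mpr hU
    -- every point of the orbit closure has some g with g • x ∈ V
    have hdense : ∀ x ∈ closure (orbit G σ), ∃ g : G, g • x ∈ V := by
      intro x hx
      have hinv : ∀ g : G, g • closure (orbit G x) ⊆ closure (orbit G x) := by
        intro g
        rintro _ ⟨y, hy, rfl⟩
        refine map_mem_closure (continuous_const_smul g) hy ?_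
        rintro _ ⟨h, rfl⟩
        simpa [mul_smul] using mem_orbit x (g * h)
      have hsub : closure (orbit G x) ⊆ closure (orbit G σ) := by
        refine closure_minimal ?_ isClosed_closure
        rintro _ ⟨g, rfl⟩
        refine map_mem_closure (continuous_const_smul g) hx ?_
        rintro _ ⟨h, rfl⟩
        simpa [mul_smul] using mem_orbit σ (g * h)
      have := hmin (closure (orbit G x)) hsub isClosed_closure hinv
        ⟨x, subset_closure (mem_orbit_self x)⟩
      have hσcl : σ ∈ closure (orbit G x) := this ▸ subset_closure (mem_orbit_self σ)
      obtain ⟨y, hyV, g, rfl⟩ :=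
        mem_closure_iff_nhds.mp hσcl V (isOpen_interior.mem_nhds hVσ)
      exact ⟨g, hyV⟩
    -- cover the compact orbit closure by open preimages of V
    have hcover : closure (orbit G σ) ⊆ ⋃ g : G, (fun x => g • x) ⁻¹' V := by
      intro x hx
      obtain ⟨g, hg⟩ := hdense x hx
      exact mem_iUnion.mpr ⟨g, hg⟩
    obtain ⟨t, ht⟩ := hcomp.elim_finite_subcover (fun g : G => (fun x => g • x) ⁻¹' V)
      (fun g => isOpen_interior.preimage (continuous_const_smul g)) hcover
    refine ⟨(t : Set G)⁻¹, (t.finite_toSet.inv).isCompact, ?_⟩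
    apply Set.eq_univ_of_forall
    intro h
    have : h • σ ∈ closure (orbit G σ) := subset_closure (mem_orbit σ h)
    obtain ⟨g, hgt, hgV⟩ := mem_iUnion₂.mp (ht this)
    refine ⟨g⁻¹, inv_mem_inv.mpr hgt, g * h, ?_, by group⟩
    show (g * h) • σ ∈ U
    exact interior_subset (by simpa [mul_smul] using hgV)
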